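/- Let (M, dist) be a metric space, let q = q_1, …, q_k be a curve with k ≥ 1 vertices, and let X and Y be curves in M, with X∘Y denoting the concatenation of X and Y. Writing q_{[a,b]} for the subcurve q_a, …, q_b, one has d_dF(q, X∘Y) = min( min_{1 ≤ i ≤ k} max( d_dF(q_{[1,i]}, X), d_dF(q_{[i,k]}, Y) ), min_{1 ≤ i ≤ k−1} max( d_dF(q_{[1,i]}, X), d_dF(q_{[i+1,k]}, Y) ) ). -/

import Mathlib

/-- One step of a traversal: each index advances by `0` or `1`,
and at least one of the two indices advances. -/
def FrechetStep (a b : ℕ × ℕ) : Prop :=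
  (b.1 = a.1 ∨ b.1 = a.1 + 1) ∧ (b.2 = a.2 ∨ b.2 = a.2 + 1) ∧ a.1 + a.2 < b.1 + b.2

/-- `T` is a traversal of two curves with `m` resp. `k` vertices.  Indices are
`0`-based: the vertices of the first curve are indexed `0, …, m-1` and those of
the second curve `0, …, k-1`. -/
def IsTraversal (m k : ℕ) (T : List (ℕ × ℕ)) : Prop :=
  T ≠ [] ∧ T.head? = some (0, 0) ∧ T.getLast? = some (m - 1, k - 1) ∧
    T.Chain' FrechetStep

/-- The cost of a traversal `T` of the curves `p` and `q`: the maximum of the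
pairwise distances of points paired by `T`. -/
noncomputable def travCost {M : Type*} [MetricSpace M] (p q : ℕ → M)
    (T : List (ℕ × ℕ)) : ℝ :=
  (T.map fun ij => dist (p ij.1) (q ij.2)).foldr max 0

/-- The discrete Fréchet distance between the curve with the `m` vertices
`p 0, …, p (m-1)` and the curve with the `k` vertices `q 0, …, q (k-1)`:
the minimum cost of a traversal of the two curves. -/
noncomputable def discreteFrechet {M : Type*} [MetricSpace M]
    (m : ℕ) (p : ℕ → M) (k : ℕ) (q : ℕ → M) : ℝ :=
  sInf (travCost p q '' {T | IsTraversal m k T})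

/- ## Auxiliary lemmas -/

private lemma foldr_max_nonneg (l : List ℝ) : 0 ≤ l.foldr max 0 := by
  induction l with
  | nil => simp
  | cons x l ih => exact le_trans ih (le_max_right _ _)

private lemma foldr_max_append (l1 l2 : List ℝ) :
    (l1 ++ l2).foldr max 0 = max (l1.foldr max 0) (l2.foldr max 0) := by
  induction l1 with
  | nil => simpa using (max_eq_right (foldr_max_nonneg l2)).symm
  | cons x l ih => simp [ih, max_assoc]

lemma travCost_nonneg {M : Type*} [MetricSpace M] (p q : ℕ → M) (T : List (ℕ × ℕ)) :
    0 ≤ travCost p q T := foldr_max_nonneg _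

lemma travCost_append {M : Type*} [MetricSpace M] (p q : ℕ → M) (T1 T2 : List (ℕ × ℕ)) :
    travCost p q (T1 ++ T2) = max (travCost p q T1) (travCost p q T2) := by
  unfold travCost; rw [List.map_append, foldr_max_append]

lemma travCost_congr {M : Type*} [MetricSpace M] {p q p' q' : ℕ → M} {T : List (ℕ × ℕ)}
    (h : ∀ ij ∈ T, dist (p ij.1) (q ij.2) = dist (p' ij.1) (q' ij.2)) :
    travCost p q T = travCost p' q' T := by
  unfold travCost
  congr 1
  exact List.map_congr_left h

lemma travCost_map_congr {M : Type*} [MetricSpace M] {p q p' q' : ℕ → M} {T : List (ℕ × ℕ)}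
    (σ : ℕ × ℕ → ℕ × ℕ)
    (h : ∀ ij ∈ T, dist (p (σ ij).1) (q (σ ij).2) = dist (p' ij.1) (q' ij.2)) :
    travCost p q (T.map σ) = travCost p' q' T := by
  unfold travCost
  rw [List.map_map]
  congr 1
  apply List.map_congr_left
  intro ij hij
  simpa using h ij hij

lemma chain'_le_getLast :
    ∀ (l : List (ℕ × ℕ)), l.Chain' FrechetStep → ∀ x ∈ l, ∀ z ∈ l.getLast?,
      x.1 ≤ z.1 ∧ x.2 ≤ z.2 := by
  intro l
  induction l with
  | nil => simp
  | cons c t ih =>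
    intro hc x hx z hz
    cases t with
    | nil =>
      simp only [List.mem_singleton] at hx
      simp only [List.getLast?_singleton, Option.mem_some_iff] at hz
      subst hx; subst hz; exact ⟨le_rfl, le_rfl⟩
    | cons d t' =>
      unfold List.Chain' at hc; rw [List.isChain_cons_cons] at hc
      rw [List.getLast?_cons_cons] at hz
      rcases List.mem_cons.mp hx with rfl | hx'
      · have hd := ih hc.2 d List.mem_cons_self z hz
        obtain ⟨h1, h2, h3⟩ := hc.1
        exact ⟨by omega, by omega⟩
      · exact ih hc.2 x hx' z hz

lemma chain'_head_le :
    ∀ (l : List (ℕ × ℕ)), l.Chain' FrechetStep → ∀ z ∈ l.head?, ∀ x ∈ l,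
      z.1 ≤ x.1 ∧ z.2 ≤ x.2 := by
  intro l
  induction l with
  | nil => simp
  | cons c t ih =>
    intro hc z hz x hx
    simp only [List.head?_cons, Option.mem_some_iff] at hz
    subst hz
    rcases List.mem_cons.mp hx with rfl | hx'
    · exact ⟨le_rfl, le_rfl⟩
    · cases t with
      | nil => simp at hx'
      | cons d t' =>
        unfold List.Chain' at hc; rw [List.isChain_cons_cons] at hc
        have hd := ih hc.2 d (by simp) x hx'
        obtain ⟨h1, h2, h3⟩ := hc.1
        exact ⟨by omega, by omega⟩

lemma chain'_imp_mem {α : Type*} {R S : α → α → Prop} :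
    ∀ {l : List α}, l.Chain' R → (∀ x ∈ l, ∀ y ∈ l, R x y → S x y) → l.Chain' S := by
  intro l
  induction l with
  | nil => intro _ _; exact List.IsChain.nil
  | cons c t ih =>
    intro hc h
    cases t with
    | nil => exact List.IsChain.singleton _
    | cons d t' =>
      unfold List.Chain' at hc ⊢; rw [List.isChain_cons_cons] at hc ⊢
      refine ⟨h c (by simp) d (by simp) hc.1, ih hc.2 ?_⟩
      intro x hx y hy
      exact h x (List.mem_cons_of_mem _ hx) y (List.mem_cons_of_mem _ hy)

lemma head_dropWhile_not {α : Type*} (p : α → Bool) :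
    ∀ (l : List α) (x : α), (l.dropWhile p).head? = some x → ¬ p x := by
  intro l
  induction l with
  | nil => simp [List.dropWhile]
  | cons c t ih =>
    intro x hx
    by_cases hp : p c
    · rw [List.dropWhile_cons_of_pos hp] at hx
      exact ih x hx
    · rw [List.dropWhile_cons_of_neg hp] at hx
      simp only [List.head?_cons, Option.some.injEq] at hx
      subst hx; exact hp

private lemma getLast?_range (n : ℕ) (h : 1 ≤ n) : (List.range n).getLast? = some (n - 1) := by
  obtain ⟨n', rfl⟩ := Nat.exists_eq_succ_of_ne_zero (Nat.one_le_iff_ne_zero.mp h)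
  rw [List.range_succ, List.getLast?_concat, Nat.succ_sub_one]

lemma exists_traversal (m k : ℕ) (hm : 1 ≤ m) (hk : 1 ≤ k) : ∃ T, IsTraversal m k T := by
  refine ⟨((List.range m).map fun i => (i, 0)) ++ ((List.range (k - 1)).map fun j => (m - 1, j + 1)),
    ?_, ?_, ?_, ?_⟩
  · simp only [ne_eq, List.append_eq_nil_iff, List.map_eq_nil_iff, List.range_eq_nil, not_and]
    omega
  · rw [List.head?_append_of_ne_nil]
    · rw [List.head?_map, List.head?_range]
      simp only [if_neg (by omega : ¬ m = 0), Option.map_some]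
    · simp only [ne_eq, List.map_eq_nil_iff, List.range_eq_nil]
      omega
  · rw [List.getLast?_append, List.getLast?_map, List.getLast?_map]
    rcases Nat.lt_or_ge k 2 with hk2 | hk2
    · have h0 : k - 1 = 0 := by omega
      rw [h0]
      simp only [List.range_zero, List.getLast?_nil, Option.map_none, Option.none_or]
      rw [getLast?_range m hm]
      simp
    · rw [getLast?_range (k - 1) (by omega)]
      have h11 : k - 1 - 1 + 1 = k - 1 := by omega
      simp [h11, Option.or]
  · unfold List.Chain'; rw [List.isChain_append]
    refine ⟨?_, ?_, ?_⟩
    · rw [List.isChain_map]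
      obtain ⟨m', rfl⟩ := Nat.exists_eq_succ_of_ne_zero (by omega : m ≠ 0)
      rw [List.isChain_range_succ]
      intro i _
      exact ⟨Or.inr rfl, Or.inl rfl, by omega⟩
    · rw [List.isChain_map]
      rcases Nat.eq_zero_or_pos (k - 1) with h0 | h0
      · rw [h0]; simp
      · obtain ⟨k', hk'⟩ := Nat.exists_eq_succ_of_ne_zero (by omega : k - 1 ≠ 0)
        rw [hk', List.isChain_range_succ]
        intro j _
        exact ⟨Or.inl rfl, Or.inr rfl, by omega⟩
    · intro x hx y hy
      rw [List.getLast?_map, getLast?_range m hm] at hx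
      rw [List.head?_map, List.head?_range] at hy
      rcases Nat.lt_or_ge k 2 with hk2 | hk2
      · have : k - 1 = 0 := by omega
        rw [this] at hy; simp at hy
      · rw [if_neg (by omega : ¬ k - 1 = 0)] at hy
        simp only [Option.map_some, Option.mem_some_iff] at hx hy
        subst hx; subst hy
        exact ⟨Or.inl rfl, Or.inr rfl, by omega⟩

lemma costs_bddBelow {M : Type*} [MetricSpace M] (m k : ℕ) (p q : ℕ → M) :
    BddBelow (travCost p q '' {T | IsTraversal m k T}) := by
  refine ⟨0, ?_⟩
  rintro x ⟨T, _, rfl⟩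
  exact travCost_nonneg p q T

lemma discreteFrechet_nonneg {M : Type*} [MetricSpace M] (m k : ℕ) (p q : ℕ → M) :
    0 ≤ discreteFrechet m p k q := by
  apply Real.sInf_nonneg
  rintro x ⟨T, _, rfl⟩
  exact travCost_nonneg p q T

lemma discreteFrechet_le {M : Type*} [MetricSpace M] {m k : ℕ} (p q : ℕ → M)
    {T : List (ℕ × ℕ)} (hT : IsTraversal m k T) :
    discreteFrechet m p k q ≤ travCost p q T :=
  csInf_le (costs_bddBelow m k p q) ⟨T, hT, rfl⟩

lemma costs_nonempty {M : Type*} [MetricSpace M] (m k : ℕ) (hm : 1 ≤ m) (hk : 1 ≤ k)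
    (p q : ℕ → M) : (travCost p q '' {T | IsTraversal m k T}).Nonempty := by
  obtain ⟨T, hT⟩ := exists_traversal m k hm hk
  exact ⟨travCost p q T, T, hT, rfl⟩

lemma glue_traversal (k a b i c k' : ℕ) (hi : 1 ≤ i) (hik : i ≤ k) (ha : 1 ≤ a) (hb : 1 ≤ b)
    (hc1 : i - 1 ≤ c) (hc2 : c ≤ i) (hk' : k' + c = k) (hk'1 : 1 ≤ k')
    (T1 T2 : List (ℕ × ℕ)) (h1 : IsTraversal i a T1) (h2 : IsTraversal k' b T2) :
    IsTraversal k (a + b) (T1 ++ T2.map fun p => (p.1 + c, p.2 + a)) := by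
  obtain ⟨h1n, h1h, h1l, h1c⟩ := h1
  obtain ⟨h2n, h2h, h2l, h2c⟩ := h2
  refine ⟨by simp [h1n], ?_, ?_, ?_⟩
  · rw [List.head?_append_of_ne_nil _ h1n, h1h]
  · rw [List.getLast?_append, List.getLast?_map, h2l]
    simp only [Option.map_some, Option.or]
    refine congrArg some (Prod.ext ?_ ?_) <;> simp <;> omega
  · unfold List.Chain'; rw [List.isChain_append]
    refine ⟨h1c, ?_, ?_⟩
    · rw [List.isChain_map]
      refine h2c.imp (fun x y hxy => ?_)
      obtain ⟨u, v, w⟩ := hxy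
      exact ⟨by simp; omega, by simp; omega, by simp; omega⟩
    · intro x hx y hy
      rw [h1l] at hx
      rw [List.head?_map, h2h] at hy
      simp only [Option.mem_some_iff, Option.map_some] at hx hy
      subst hx; subst hy
      exact ⟨by simp; omega, by simp; omega, by simp; omega⟩

lemma glue_cost {M : Type*} [MetricSpace M] (q X Y : ℕ → M) (a c : ℕ)
    (T1 T2 : List (ℕ × ℕ)) (hT1 : ∀ x ∈ T1, x.2 < a) :
    travCost q (fun j => if j < a then X j else Y (j - a))
        (T1 ++ T2.map fun p => (p.1 + c, p.2 + a)) =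
      max (travCost q X T1) (travCost (fun j => q (c + j)) Y T2) := by
  rw [travCost_append]
  congr 1
  · apply travCost_congr
    intro ij hij
    rw [if_pos (hT1 ij hij)]
  · apply travCost_map_congr
    intro ij _
    simp only
    rw [if_neg (by omega), Nat.add_sub_cancel, Nat.add_comm]

private lemma mk_step {x1 x2 y1 y2 : ℕ} (h1 : y1 = x1 ∨ y1 = x1 + 1)
    (h2 : y2 = x2 ∨ y2 = x2 + 1) (h3 : x1 + x2 < y1 + y2) :
    FrechetStep (x1, x2) (y1, y2) := ⟨h1, h2, h3⟩

/-- **composition / splitting along a concatenation.**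
For a query curve `q` with `k ≥ 1` vertices and curves `X` (with `a` vertices)
and `Y` (with `b` vertices),
`d_dF(q, X∘Y)` equals the minimum, over all `1 ≤ i ≤ k`, of
`max(d_dF(q_{[1,i]}, X), d_dF(q_{[i,k]}, Y))`, and over all `1 ≤ i ≤ k − 1`, of
`max(d_dF(q_{[1,i]}, X), d_dF(q_{[i+1,k]}, Y))`.
Here (with `1`-based index `i` as in the paper, applied to the `0`-based
vertex functions): `q_{[1,i]}` is `q` with complexity `i`, `q_{[i,k]}` is
`fun j => q (i - 1 + j)` with complexity `k - i + 1`, and `q_{[i+1,k]}` is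
`fun j => q (i + j)` with complexity `k - i`; the concatenation `X∘Y` is
`fun j => if j < a then X j else Y (j - a)` with complexity `a + b`. -/
theorem discreteFrechet_concat {M : Type*} [MetricSpace M]
    (k a b : ℕ) (hk : 1 ≤ k) (ha : 1 ≤ a) (hb : 1 ≤ b)
    (q X Y : ℕ → M) :
    discreteFrechet k q (a + b) (fun j => if j < a then X j else Y (j - a)) =
      sInf ({ c | ∃ i, 1 ≤ i ∧ i ≤ k ∧
                c = max (discreteFrechet i q a X)
                    (discreteFrechet (k - i + 1) (fun j => q (i - 1 + j)) b Y) } ∪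
            { c | ∃ i, 1 ≤ i ∧ i ≤ k - 1 ∧
                c = max (discreteFrechet i q a X)
                    (discreteFrechet (k - i) (fun j => q (i + j)) b Y) }) := by
  have hSbdd : BddBelow ({ c | ∃ i, 1 ≤ i ∧ i ≤ k ∧
                c = max (discreteFrechet i q a X)
                    (discreteFrechet (k - i + 1) (fun j => q (i - 1 + j)) b Y) } ∪
            { c | ∃ i, 1 ≤ i ∧ i ≤ k - 1 ∧
                c = max (discreteFrechet i q a X)
                    (discreteFrechet (k - i) (fun j => q (i + j)) b Y) }) := by
    refine ⟨0, ?_⟩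
    rintro x (⟨i, _, _, rfl⟩ | ⟨i, _, _, rfl⟩) <;>
      exact le_max_of_le_left (discreteFrechet_nonneg _ _ _ _)
  apply le_antisymm
  · -- LHS ≤ sInf S
    refine le_csInf ⟨_, Or.inl ⟨1, le_rfl, hk, rfl⟩⟩ ?_
    rintro x (⟨i, hi1, hik, rfl⟩ | ⟨i, hi1, hik, rfl⟩)
    · -- left family: shift c = i - 1, k' = k - i + 1
      by_contra hlt
      push_neg at hlt
      have hd1 := lt_of_le_of_lt (le_max_left _ _) hlt
      have hd2 := lt_of_le_of_lt (le_max_right _ _) hlt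
      unfold discreteFrechet at hd1 hd2
      obtain ⟨c1, hc1mem, hc1lt⟩ :=
        exists_lt_of_csInf_lt (costs_nonempty i a hi1 ha q X) hd1
      obtain ⟨c2, hc2mem, hc2lt⟩ :=
        exists_lt_of_csInf_lt (costs_nonempty (k - i + 1) b (by omega) hb _ Y) hd2
      obtain ⟨T1, hT1, rfl⟩ := hc1mem
      obtain ⟨T2, hT2, rfl⟩ := hc2mem
      have hT1' : IsTraversal i a T1 := hT1
      have hT2' : IsTraversal (k - i + 1) b T2 := hT2
      have hmemT1 : ∀ x ∈ T1, x.2 < a := by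
        intro x hx
        have hz : ((i - 1 : ℕ), a - 1) ∈ T1.getLast? := by
          rw [Option.mem_def, hT1'.2.2.1]
        have hle2 : x.2 ≤ a - 1 := by
          simpa using (chain'_le_getLast T1 hT1'.2.2.2 x hx _ hz).2
        omega
      have hglue := glue_traversal k a b i (i - 1) (k - i + 1) hi1 hik ha hb
        le_rfl (by omega) (by omega) (by omega) T1 T2 hT1' hT2'
      have hcost := glue_cost q X Y a (i - 1) T1 T2 hmemT1
      have hle := discreteFrechet_le q (fun j => if j < a then X j else Y (j - a)) hglue
      rw [hcost] at hle
      exact absurd (max_lt hc1lt hc2lt) (not_lt.mpr hle)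
    · -- right family: shift c = i, k' = k - i
      by_contra hlt
      push_neg at hlt
      have hd1 := lt_of_le_of_lt (le_max_left _ _) hlt
      have hd2 := lt_of_le_of_lt (le_max_right _ _) hlt
      unfold discreteFrechet at hd1 hd2
      obtain ⟨c1, hc1mem, hc1lt⟩ :=
        exists_lt_of_csInf_lt (costs_nonempty i a hi1 ha q X) hd1
      obtain ⟨c2, hc2mem, hc2lt⟩ :=
        exists_lt_of_csInf_lt (costs_nonempty (k - i) b (by omega) hb _ Y) hd2
      obtain ⟨T1, hT1, rfl⟩ := hc1mem
      obtain ⟨T2, hT2, rfl⟩ := hc2mem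
      have hT1' : IsTraversal i a T1 := hT1
      have hT2' : IsTraversal (k - i) b T2 := hT2
      have hmemT1 : ∀ x ∈ T1, x.2 < a := by
        intro x hx
        have hz : ((i - 1 : ℕ), a - 1) ∈ T1.getLast? := by
          rw [Option.mem_def, hT1'.2.2.1]
        have hle2 : x.2 ≤ a - 1 := by
          simpa using (chain'_le_getLast T1 hT1'.2.2.2 x hx _ hz).2
        omega
      have hglue := glue_traversal k a b i i (k - i) hi1 (by omega) ha hb
        (by omega) le_rfl (by omega) (by omega) T1 T2 hT1' hT2'
      have hcost := glue_cost q X Y a i T1 T2 hmemT1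
      have hle := discreteFrechet_le q (fun j => if j < a then X j else Y (j - a)) hglue
      rw [hcost] at hle
      exact absurd (max_lt hc1lt hc2lt) (not_lt.mpr hle)
  · -- sInf S ≤ LHS
    refine le_csInf
      (costs_nonempty k (a + b) hk (by omega) q (fun j => if j < a then X j else Y (j - a))) ?_
    rintro x ⟨T, hT, rfl⟩
    obtain ⟨hTn, hTh, hTl, hTc⟩ := hT
    classical
    obtain ⟨T1, T2, hsplit, hT1n, hT2n, hT1mem, hT2mem⟩ :
        ∃ T1 T2, T1 ++ T2 = T ∧ T1 ≠ [] ∧ T2 ≠ [] ∧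
          (∀ x ∈ T1, x.2 < a) ∧ (∀ x ∈ T2, ¬ x.2 < a) := by
      set P : ℕ × ℕ → Bool := fun x => decide (x.2 < a) with hP
      have hsuf : T.dropWhile P <:+ T := ⟨T.takeWhile P, List.takeWhile_append_dropWhile ..⟩
      have hT2n : T.dropWhile P ≠ [] := by
        intro h
        rw [List.dropWhile_eq_nil_iff] at h
        have hgl : T.getLast hTn = ((k - 1 : ℕ), a + b - 1) := by
          have h' := List.getLast?_eq_getLast (l := T) hTn
          rw [hTl] at h'
          exact (Option.some.inj h').symm
        have h'' := h (T.getLast hTn) (List.getLast_mem hTn)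
        rw [hgl] at h''
        simp only [hP, decide_eq_true_eq] at h''
        omega
      refine ⟨T.takeWhile P, T.dropWhile P, List.takeWhile_append_dropWhile ..,
        ?_, hT2n, ?_, ?_⟩
      · obtain ⟨hd, tl, rfl⟩ := List.exists_cons_of_ne_nil hTn
        have hhd : hd = (0, 0) := by simpa using hTh
        subst hhd
        rw [List.takeWhile_cons_of_pos (by simp [hP]; omega)]
        simp
      · intro x hx
        have := List.mem_takeWhile_imp hx
        simpa [hP] using this
      · intro x hx
        have hchain2 : (T.dropWhile P).Chain' FrechetStep := hTc.suffix hsuf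
        have hhd : (T.dropWhile P).head? = some ((T.dropWhile P).head hT2n) :=
          List.head?_eq_head hT2n
        have hnp := head_dropWhile_not P T _ hhd
        have hnp' : ¬ ((T.dropWhile P).head hT2n).2 < a :=
          fun h => hnp (by simp only [hP, decide_eq_true_eq]; exact h)
        have hle := (chain'_head_le _ hchain2 _ hhd x hx).2
        omega
    have hchain : (T1 ++ T2).Chain' FrechetStep := by rw [hsplit]; exact hTc
    unfold List.Chain' at hchain; rw [List.isChain_append] at hchain
    obtain ⟨hc1, hc2, hmid⟩ := hchain
    have hhead1 : T1.head? = some (0, 0) := by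
      rw [← hsplit, List.head?_append_of_ne_nil _ hT1n] at hTh
      exact hTh
    have hlast2 : T2.getLast? = some ((k - 1 : ℕ), a + b - 1) := by
      rw [← hsplit, List.getLast?_append, List.getLast?_eq_getLast hT2n] at hTl
      rw [List.getLast?_eq_getLast hT2n]
      exact hTl
    set z1 := T1.getLast hT1n with hz1def
    set hB := T2.head hT2n with hBdef
    have hstep : FrechetStep z1 hB :=
      hmid z1 (List.getLast?_eq_getLast hT1n) hB (List.head?_eq_head hT2n)
    obtain ⟨hs1, hs2, hs3⟩ := hstep
    have hz1a : z1.2 < a := hT1mem z1 (List.getLast_mem hT1n)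
    have hhBa : ¬ hB.2 < a := hT2mem hB (List.head_mem hT2n)
    have hub : hB.1 ≤ k - 1 := by
      have h' : hB.1 ≤ ((k - 1 : ℕ), a + b - 1).1 :=
        (chain'_le_getLast T2 hc2 hB (List.head_mem hT2n) _
          (by rw [Option.mem_def, hlast2])).1
      simpa using h'
    have hlow : ∀ x ∈ T2, hB.1 ≤ x.1 ∧ a ≤ x.2 := by
      intro x hx
      have h' := chain'_head_le T2 hc2 hB (List.head?_eq_head hT2n) x hx
      exact ⟨h'.1, by omega⟩
    have hIT1 : IsTraversal (z1.1 + 1) a T1 := by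
      refine ⟨hT1n, hhead1, ?_, hc1⟩
      rw [List.getLast?_eq_getLast hT1n, ← hz1def]
      refine congrArg some (Prod.ext ?_ ?_) <;> simp <;> omega
    have hIT2 : IsTraversal (k - hB.1) b
        (T2.map fun p => (p.1 - hB.1, p.2 - a)) := by
      refine ⟨by simp [hT2n], ?_, ?_, ?_⟩
      · rw [List.head?_map, List.head?_eq_head hT2n, ← hBdef, Option.map_some]
        refine congrArg some (Prod.ext ?_ ?_) <;> simp <;> omega
      · rw [List.getLast?_map, hlast2, Option.map_some]
        refine congrArg some (Prod.ext ?_ ?_) <;> simp <;> omega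
      · unfold List.Chain'; rw [List.isChain_map]
        refine chain'_imp_mem hc2 ?_
        intro x hx y hy hxy
        obtain ⟨hp1, hp2⟩ := hlow x hx
        obtain ⟨hq1, hq2⟩ := hlow y hy
        obtain ⟨w1, w2, w3⟩ := hxy
        exact mk_step (by omega) (by omega) (by omega)
    have e1 : travCost q (fun j => if j < a then X j else Y (j - a)) T1
        = travCost q X T1 := by
      apply travCost_congr
      intro ij hij
      simp [hT1mem ij hij]
    have e2 : travCost (fun j => q (hB.1 + j)) Y
        (T2.map fun p => (p.1 - hB.1, p.2 - a))
        = travCost q (fun j => if j < a then X j else Y (j - a)) T2 := by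
      apply travCost_map_congr
      intro ij hij
      obtain ⟨hp1, hp2⟩ := hlow ij hij
      have hadd : hB.1 + (ij.1 - hB.1) = ij.1 := by omega
      simp only [hadd, if_neg (hT2mem ij hij)]
    have bound : max (discreteFrechet (z1.1 + 1) q a X)
        (discreteFrechet (k - hB.1) (fun j => q (hB.1 + j)) b Y)
        ≤ travCost q (fun j => if j < a then X j else Y (j - a)) T := by
      rw [← hsplit, travCost_append]
      exact max_le_max ((discreteFrechet_le q X hIT1).trans e1.ge)
        ((discreteFrechet_le _ Y hIT2).trans e2.le)
    rcases hs1 with he | he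
    · -- hB.1 = z1.1 : left family with i = z1.1 + 1
      refine le_trans (csInf_le hSbdd (Or.inl ⟨z1.1 + 1, by omega, by omega, ?_⟩)) bound
      have e3 : k - (z1.1 + 1) + 1 = k - hB.1 := by omega
      have e4 : (fun j => q (z1.1 + 1 - 1 + j)) = fun j => q (hB.1 + j) := by
        funext j; congr 1; omega
      rw [e3, e4]
    · -- hB.1 = z1.1 + 1 : right family with i = z1.1 + 1
      refine le_trans (csInf_le hSbdd (Or.inr ⟨z1.1 + 1, by omega, by omega, ?_⟩)) bound
      have e3 : k - (z1.1 + 1) = k - hB.1 := by omega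
      have e4 : (fun j => q (z1.1 + 1 + j)) = fun j => q (hB.1 + j) := by
        funext j; congr 1; omega
      rw [e3, e4]
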